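/- Let L ≥ 1 and N_1, …, N_L be natural numbers with n = N_1 + … + N_L ≥ 1. Let A be a family of L-tuples a = (a_1, …, a_L) of natural numbers with 0 ≤ a_l ≤ N_l for all l, such that A is an antichain for the componentwise order: no two distinct members a, b of A satisfy a_l ≤ b_l for every l. Then |A| ≤ C(⌈n/2⌉ + L − 1, L − 1). -/

import Mathlib

private def rk {L : ℕ} (a : Fin L → ℕ) : ℕ := ∑ l, a l

private lemma rk_snoc {L : ℕ} (b : Fin L → ℕ) (y : ℕ) :
    rk (Fin.snoc b y) = rk b + y := by
  simp [rk, Fin.sum_univ_castSucc]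

private lemma rk_eq {L : ℕ} (a : Fin (L+1) → ℕ) :
    rk a = rk (Fin.init a) + a (Fin.last L) := by
  simp [rk, Fin.sum_univ_castSucc, Fin.init]

private def tOf (q x y : ℕ) : ℕ := if x + y ≤ q then x else q - y

private def hookC {L : ℕ} (q i' t : ℕ) (c : ℕ → (Fin L → ℕ)) (r : ℕ) : Fin (L+1) → ℕ :=
  if r ≤ i' + q then Fin.snoc (c (i' + t)) (r - (i' + t)) else Fin.snoc (c (r - (q - t))) (q - t)

private lemma snoc_le_snoc {L : ℕ} {b b' : Fin L → ℕ} {v v' : ℕ}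
    (hb : ∀ l, b l ≤ b' l) (hv : v ≤ v') :
    ∀ l, (Fin.snoc b v : Fin (L+1) → ℕ) l ≤ (Fin.snoc b' v' : Fin (L+1) → ℕ) l := by
  intro l
  refine Fin.lastCases ?_ ?_ l
  · simpa using hv
  · intro j; simpa using hb j

private lemma scd : ∀ (L : ℕ) (N : Fin L → ℕ),
    ∃ (I : (Fin L → ℕ) → ℕ) (C : (Fin L → ℕ) → ℕ → (Fin L → ℕ)),
      ∀ a, (∀ l, a l ≤ N l) →
        (I a ≤ rk a ∧ rk a + I a ≤ rk N) ∧
        (∀ r, I a ≤ r → r + I a ≤ rk N →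
          ((∀ l, C a r l ≤ N l) ∧ rk (C a r) = r)) ∧
        (∀ r, I a ≤ r → (r + 1) + I a ≤ rk N → ∀ l, C a r l ≤ C a (r+1) l) ∧
        C a (rk a) = a ∧
        (∀ r, I a ≤ r → r + I a ≤ rk N → I (C a r) = I a ∧ C (C a r) = C a) := by
  intro L
  induction L with
  | zero =>
    intro N
    refine ⟨fun _ => 0, fun a _ => a, ?_⟩
    intro a _
    dsimp only
    have h0 : rk a = 0 := by simp [rk]
    have hN : rk N = 0 := by simp [rk]
    refine ⟨⟨by omega, by omega⟩, ?_, ?_, rfl, ?_⟩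
    · intro r h1 h2
      exact ⟨fun l => l.elim0, by omega⟩
    · intro r h1 h2; omega
    · intro r _ _; exact ⟨rfl, rfl⟩
  | succ L IH =>
    intro N
    obtain ⟨I', C', hIH⟩ := IH (Fin.init N)
    set q := N (Fin.last L) with hq
    refine ⟨fun b => I' (Fin.init b) + tOf q (rk (Fin.init b) - I' (Fin.init b)) (b (Fin.last L)),
            fun b => hookC q (I' (Fin.init b))
              (tOf q (rk (Fin.init b) - I' (Fin.init b)) (b (Fin.last L))) (C' (Fin.init b)),
            ?_⟩
    intro a ha
    dsimp only
    set a' := Fin.init a with ha'def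
    set y := a (Fin.last L) with hydef
    have hbox' : ∀ l, a' l ≤ Fin.init N l := fun l => ha l.castSucc
    obtain ⟨⟨hv1, hv2⟩, hi, hii, hiii, hiv⟩ := hIH a' hbox'
    set i' := I' a' with hi'def
    set x := rk a' - i' with hxdef
    set t := tOf q x y with htdef
    set n' := rk (Fin.init N) with hn'def
    have hn : rk N = n' + q := rk_eq N
    have hra : rk a = rk a' + y := rk_eq a
    have hx : i' + x = rk a' := by omega
    have hyq : y ≤ q := ha (Fin.last L)
    have htx : t ≤ x := by
      rw [htdef, tOf]; split_ifs with hc <;> omega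
    have htq : t ≤ q := by
      rw [htdef, tOf]; split_ifs with hc <;> omega
    have htcase : (x + y ≤ q ∧ t = x) ∨ (¬ (x + y ≤ q) ∧ t = q - y) := by
      rw [htdef, tOf]; split_ifs with hc
      · exact Or.inl ⟨hc, rfl⟩
      · exact Or.inr ⟨hc, rfl⟩
    have hti : i' ≤ i' + t := by omega
    have htub : (i' + t) + i' ≤ n' := by omega
    have hboxN : ∀ (u : Fin L → ℕ) (v : ℕ), (∀ l, u l ≤ Fin.init N l) → v ≤ q →
        ∀ l, (Fin.snoc u v : Fin (L+1) → ℕ) l ≤ N l := by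
      intro u v hu hv l
      refine Fin.lastCases ?_ ?_ l
      · simpa [hq] using hv
      · intro j; simpa [Fin.init] using hu j
    refine ⟨?_, ?_, ?_, ?_, ?_⟩
    · -- (v)
      rcases htcase with ⟨hc, htv⟩ | ⟨hc, htv⟩ <;> omega
    · -- (i)
      intro r hr1 hr2
      rw [hookC]
      split_ifs with hcase
      · obtain ⟨hb, hrkb⟩ := hi (i' + t) hti htub
        refine ⟨hboxN _ _ hb (by omega), ?_⟩
        rw [rk_snoc, hrkb]; omega
      · obtain ⟨hb, hrkb⟩ := hi (r - (q - t)) (by omega) (by omega)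
        refine ⟨hboxN _ _ hb (by omega), ?_⟩
        rw [rk_snoc, hrkb]; omega
    · -- (ii)
      intro r hr1 hr2
      rw [hookC, hookC]
      split_ifs with hc1 hc2 hc2
      · exact snoc_le_snoc (fun l => le_rfl) (by omega)
      · have e1 : r - (i' + t) = q - t := by omega
        have e2 : r + 1 - (q - t) = (i' + t) + 1 := by omega
        rw [e1, e2]
        exact snoc_le_snoc (hii (i' + t) hti (by omega)) le_rfl
      · omega
      · have e2 : r + 1 - (q - t) = (r - (q - t)) + 1 := by omega
        rw [e2]
        exact snoc_le_snoc (hii (r - (q - t)) (by omega) (by omega)) le_rfl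
    · -- (iii)
      rw [hookC]
      rcases htcase with ⟨hc, htv⟩ | ⟨hc, htv⟩
      · rw [if_pos (by omega)]
        have e1 : i' + t = rk a' := by omega
        have e2 : rk a - (i' + t) = y := by omega
        rw [e2, e1, hiii]
        exact Fin.snoc_init_self a
      · rw [if_neg (by omega)]
        have e1 : q - t = y := by omega
        have e2 : rk a - (q - t) = rk a' := by omega
        rw [e2, e1, hiii]
        exact Fin.snoc_init_self a
    · -- (iv)
      intro r hr1 hr2
      rw [hookC]
      split_ifs with hcase
      · obtain ⟨hIu, hCu⟩ := hiv (i' + t) hti htub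
        obtain ⟨_, hrku⟩ := hi (i' + t) hti htub
        rw [Fin.init_snoc, Fin.snoc_last, hIu, hCu, hrku]
        have e : tOf q (i' + t - i') (r - (i' + t)) = t := by
          rw [tOf, if_pos (by omega)]; omega
        rw [e]
        exact ⟨rfl, rfl⟩
      · obtain ⟨hIu, hCu⟩ := hiv (r - (q - t)) (by omega) (by omega)
        obtain ⟨_, hrku⟩ := hi (r - (q - t)) (by omega) (by omega)
        rw [Fin.init_snoc, Fin.snoc_last, hIu, hCu, hrku]
        have e : tOf q (r - (q - t) - i') (q - t) = t := by
          rw [tOf, if_neg (by omega)]; omega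
        rw [e]
        exact ⟨rfl, rfl⟩

private lemma toSym_count {L : ℕ} (x : Fin L → ℕ) (l : Fin L) :
    Multiset.count l (Finset.univ.val.bind fun j => Multiset.replicate (x j) j) = x l := by
  rw [Multiset.count_bind]
  have h1 : (fun b => Multiset.count l (Multiset.replicate (x b) b))
      = fun b => if b = l then x b else 0 := by
    funext b; rw [Multiset.count_replicate]
  rw [h1]
  have h2 : (Finset.univ.val.map fun b => if b = l then x b else 0).sum
      = ∑ b : Fin L, if b = l then x b else 0 := rfl
  rw [h2, Finset.sum_ite_eq']
  simp

private lemma toSym_card {L : ℕ} (x : Fin L → ℕ) :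
    Multiset.card (Finset.univ.val.bind fun j => Multiset.replicate (x j) j) = ∑ l, x l := by
  simp [Multiset.card_bind, Finset.sum, Function.comp]

/-- Fact 2, combinatorial content. An antichain, for the componentwise
order, of `L`-tuples `a` with `a l ≤ N_l` has size at most `C(⌈n/2⌉ + L − 1, L − 1)`,
where `n = N_1 + ⋯ + N_L`. -/
theorem antichain_card_le_weak_compositions
    (L : ℕ) (hL : 1 ≤ L) (Ngroup : Fin L → ℕ) (n : ℕ) (hn : n = ∑ l, Ngroup l)
    (hn1 : 1 ≤ n) (A : Finset (Fin L → ℕ))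
    (hbdd : ∀ a ∈ A, ∀ l, a l ≤ Ngroup l)
    (hantichain : ∀ a ∈ A, ∀ b ∈ A, a ≠ b → ¬ ∀ l, a l ≤ b l) :
    A.card ≤ Nat.choose ((n + 1) / 2 + L - 1) (L - 1) := by
  classical
  obtain ⟨I, C, hscd⟩ := scd L Ngroup
  have hrkN : rk Ngroup = n := hn.symm
  set m := (n + 1) / 2 with hm
  -- chains are monotone
  have mono : ∀ z, (∀ l, z l ≤ Ngroup l) → ∀ r r', I z ≤ r → r ≤ r' → r' + I z ≤ n →
      ∀ l, C z r l ≤ C z r' l := by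
    intro z hz r r' hr hrr'
    obtain ⟨_, _, hiiz, _, _⟩ := hscd z hz
    rw [hrkN] at hiiz
    induction r', hrr' using Nat.le_induction with
    | base => intro _ l; exact le_rfl
    | succ r' hrr' IH2 =>
      intro hub l
      exact le_trans (IH2 (by omega) l) (hiiz r' (by omega) (by omega) l)
  -- the representative map
  have hmem : ∀ a ∈ A, (∀ l, C a m l ≤ Ngroup l) ∧ rk (C a m) = m := by
    intro a ha
    obtain ⟨⟨hv1, hv2⟩, hi, _, _, _⟩ := hscd a (hbdd a ha)
    rw [hrkN] at hv2 hi
    exact hi m (by omega) (by omega)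
  have hinj : ∀ a ∈ A, ∀ b ∈ A, C a m = C b m → a = b := by
    intro a ha b hb hab
    obtain ⟨⟨hva1, hva2⟩, hia, _, hiiia, hiva⟩ := hscd a (hbdd a ha)
    obtain ⟨⟨hvb1, hvb2⟩, hib, _, hiiib, hivb⟩ := hscd b (hbdd b hb)
    rw [hrkN] at hva2 hvb2 hia hib hiva hivb
    obtain ⟨hIza, hCza⟩ := hiva m (by omega) (by omega)
    have h2 := hivb m (by omega) (by omega)
    rw [← hab] at h2
    obtain ⟨hIzb, hCzb⟩ := h2
    have hzbox : ∀ l, C a m l ≤ Ngroup l := (hmem a ha).1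
    have hA : C (C a m) (rk a) = a := by rw [hCza]; exact hiiia
    have hB : C (C a m) (rk b) = b := by rw [hCzb]; exact hiiib
    by_contra hne
    rcases le_total (rk a) (rk b) with hle | hle
    · refine hantichain a ha b hb hne ?_
      intro l
      rw [← hA, ← hB]
      exact mono (C a m) hzbox (rk a) (rk b) (by omega) hle (by omega) l
    · refine hantichain b hb a ha (Ne.symm hne) ?_
      intro l
      rw [← hA, ← hB]
      exact mono (C a m) hzbox (rk b) (rk a) (by omega) hle (by omega) l
  -- inject into Sym (Fin L) m
  have hcard : A.card ≤ Fintype.card (Sym (Fin L) m) := by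
    rw [← Fintype.card_coe A]
    have : Function.Injective (fun a : ↥A =>
        (⟨Finset.univ.val.bind fun j => Multiset.replicate (C a.1 m j) j, by
          rw [toSym_card]; exact (hmem a.1 a.2).2⟩ : Sym (Fin L) m)) := by
      intro a b hab
      have hms := congrArg Sym.toMultiset hab
      simp only [Sym.toMultiset] at hms
      have hfun : C a.1 m = C b.1 m := by
        funext l
        rw [← toSym_count (C a.1 m) l, ← toSym_count (C b.1 m) l, hms]
      exact Subtype.ext (hinj a.1 a.2 b.1 b.2 hfun)
    exact Fintype.card_le_of_injective _ this
  have hsym : Fintype.card (Sym (Fin L) m) = (m + L - 1).choose (L - 1) := by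
    rw [Sym.card_sym_eq_choose, Fintype.card_fin]
    have h1 : L + m - 1 = m + L - 1 := by omega
    have h2 : m + L - 1 - m = L - 1 := by omega
    rw [h1, ← h2, Nat.choose_symm (by omega)]
  omega
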